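/- Let M ∈ ℝ^{m×n} be partitioned in blocks with top-left s×s block A_M, let G ∈ ℝ^{m×s}, S ∈ ℝ^{s×n} satisfy ‖M − GS‖₂ ≤ e_s, let G_A be the top s rows of G and S_A the first s columns of S. Assume: (1) σ_s(GS) > 0; (2) there is γ ≥ 1 with σ_s(G)·σ_s(S) = σ_s(GS)/γ; (3) there is β ≥ 1 with σ_s(G_A) ≥ σ_s(G)/β and σ_s(S_A) ≥ σ_s(S)/β; (4) e_s < (σ_s(M) − e_s)/(β²γ); and additionally (5) σ_{s+1}(M) < (σ_s(M) − e_s)/(β²γ) − e_s. Then A_lg, the top-left s×s block of the best rank-s approximation M_lg of M, is nonsingular. -/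

import Mathlib

open Matrix

theorem Matrix.isHermitian_transpose_mul_self {m n α : Type*} [Fintype m] [CommSemiring α]
    [StarRing α] [TrivialStar α] (A : Matrix m n α) : (Aᵀ * A).IsHermitian := by
  rw [IsHermitian, conjTranspose_eq_transpose_of_trivial, transpose_mul, transpose_transpose]

/-- `sv A k` is the `k`-th largest singular value (1-indexed) of the real matrix `A`,
computed as the `k`-th largest square root of an eigenvalue of `Aᵀ * A`. -/
noncomputable def sv {p q : ℕ} (A : Matrix (Fin p) (Fin q) ℝ) (k : ℕ) : ℝ :=
  if h : q - k < q then
    (fun i : Fin q => Real.sqrt ((Matrix.isHermitian_transpose_mul_self A).eigenvalues i))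
      (Tuple.sort (fun i : Fin q =>
        Real.sqrt ((Matrix.isHermitian_transpose_mul_self A).eigenvalues i)) ⟨q - k, h⟩)
  else 0


noncomputable def nrm {q : ℕ} (x : Fin q → ℝ) : ℝ :=
  ‖(WithLp.equiv 2 (Fin q → ℝ)).symm x‖

lemma nrm_nonneg {q : ℕ} (x : Fin q → ℝ) : 0 ≤ nrm x := norm_nonneg _

lemma nrm_sq {q : ℕ} (x : Fin q → ℝ) : nrm x ^ 2 = x ⬝ᵥ x := by
  rw [nrm, ← real_inner_self_eq_norm_sq]
  simp [-real_inner_self_eq_norm_sq, PiLp.inner_apply, RCLike.inner_apply, dotProduct, mul_comm]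
  rw [EuclideanSpace.real_norm_sq_eq]; simp [sq]

lemma dot_self_nonneg {q : ℕ} (x : Fin q → ℝ) : 0 ≤ x ⬝ᵥ x := by
  rw [← nrm_sq]; positivity

lemma nrm_eq_sqrt {q : ℕ} (x : Fin q → ℝ) : nrm x = Real.sqrt (x ⬝ᵥ x) := by
  rw [← nrm_sq, Real.sqrt_sq (nrm_nonneg x)]

lemma nrm_add_le {q : ℕ} (x y : Fin q → ℝ) : nrm (x + y) ≤ nrm x + nrm y := by
  rw [nrm, nrm, nrm]; exact norm_add_le ((WithLp.equiv 2 (Fin q → ℝ)).symm x) ((WithLp.equiv 2 (Fin q → ℝ)).symm y)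

lemma nrm_sub_ge {q : ℕ} (x y : Fin q → ℝ) : nrm x - nrm y ≤ nrm (x - y) := by
  have := nrm_add_le (x - y) y
  simp only [sub_add_cancel] at this
  linarith

lemma nrm_pos {q : ℕ} {x : Fin q → ℝ} (hx : x ≠ 0) : 0 < nrm x := by
  rw [nrm, norm_pos_iff]
  simpa using hx

namespace svh

variable {p q : ℕ} (A : Matrix (Fin p) (Fin q) ℝ)

noncomputable def f : Fin q → ℝ :=
  fun i => Real.sqrt ((Matrix.isHermitian_transpose_mul_self A).eigenvalues i)

lemma f_nonneg (i : Fin q) : 0 ≤ f A i := Real.sqrt_nonneg _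

lemma sv_eq {k : ℕ} (hk : 1 ≤ k) (hq : 0 < q) :
    sv A k = f A (Tuple.sort (f A) ⟨q - k, Nat.sub_lt hq hk⟩) := by
  rw [sv, dif_pos (Nat.sub_lt hq hk)]; rfl

lemma sv_nonneg (k : ℕ) : 0 ≤ sv A k := by
  rw [sv]; split_ifs
  · exact Real.sqrt_nonneg _
  · exact le_refl 0

lemma sv_antitone {k k' : ℕ} (hk : 1 ≤ k)
    (hkk : k ≤ k') (hk' : k' ≤ q) : sv A k' ≤ sv A k := by
  have hq : 0 < q := lt_of_lt_of_le (lt_of_lt_of_le one_pos hk) (le_trans hkk hk')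
  rw [sv_eq A hk hq, sv_eq A (le_trans hk hkk) hq]
  exact Tuple.monotone_sort (f A) (by simp [Fin.le_def]; omega)

lemma f_le_sv_one (hq : 0 < q) (i : Fin q) :
    f A i ≤ sv A 1 := by
  rw [sv_eq A le_rfl hq]
  have h1 : f A i = (f A ∘ Tuple.sort (f A)) ((Tuple.sort (f A))⁻¹ i) := by simp
  rw [h1]
  exact Tuple.monotone_sort (f A) (by simp [Fin.le_def]; omega)

lemma sv_q_le_f (hq : 0 < q) (i : Fin q) :
    sv A q ≤ f A i := by
  rw [sv_eq A hq hq]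
  have h1 : f A i = (f A ∘ Tuple.sort (f A)) ((Tuple.sort (f A))⁻¹ i) := by simp
  rw [h1]
  exact Tuple.monotone_sort (f A) (by simp [Fin.le_def])

noncomputable def lam : Fin q → ℝ :=
  (Matrix.isHermitian_transpose_mul_self A).eigenvalues

noncomputable def B : OrthonormalBasis (Fin q) ℝ (EuclideanSpace ℝ (Fin q)) :=
  (Matrix.isHermitian_transpose_mul_self A).eigenvectorBasis

lemma lam_nonneg (i : Fin q) : 0 ≤ lam A i :=
  Matrix.eigenvalues_conjTranspose_mul_self_nonneg A i

lemma lam_eq_sq (i : Fin q) : lam A i = f A i ^ 2 :=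
  (Real.sq_sqrt (lam_nonneg A i)).symm

lemma inner_eq_dot (u v : EuclideanSpace ℝ (Fin q)) :
    (inner ℝ u v : ℝ) = (u : Fin q → ℝ) ⬝ᵥ (v : Fin q → ℝ) := by
  simp [PiLp.inner_apply, RCLike.inner_apply, dotProduct, mul_comm]

lemma parseval (x : EuclideanSpace ℝ (Fin q)) :
    (x : Fin q → ℝ) ⬝ᵥ (x : Fin q → ℝ) = ∑ i, ((B A i : Fin q → ℝ) ⬝ᵥ x) ^ 2 := by
  have h := (B A).sum_inner_mul_inner x x
  rw [← inner_eq_dot, ← h]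
  congr 1; funext i
  rw [real_inner_comm x (B A i), inner_eq_dot, sq, dotProduct_comm]

lemma expand (x : EuclideanSpace ℝ (Fin q)) :
    (A *ᵥ x) ⬝ᵥ (A *ᵥ x) = ∑ i, lam A i * ((B A i : Fin q → ℝ) ⬝ᵥ x) ^ 2 := by
  have h1 : (A *ᵥ x) ⬝ᵥ (A *ᵥ x) = (x : Fin q → ℝ) ⬝ᵥ ((Aᴴ * A) *ᵥ x) := by
    rw [← Matrix.mulVec_mulVec, Matrix.dotProduct_mulVec x Aᴴ (A *ᵥ x)]
    congr 1
    rw [Matrix.conjTranspose_eq_transpose_of_trivial, Matrix.vecMul_transpose]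
  have h2 := (B A).sum_inner_mul_inner x ((WithLp.equiv 2 (Fin q → ℝ)).symm ((Aᴴ * A) *ᵥ x))
  have h3 : ∀ i : Fin q,
      (inner ℝ (B A i) ((WithLp.equiv 2 (Fin q → ℝ)).symm ((Aᴴ * A) *ᵥ x)) : ℝ)
      = lam A i * ((B A i : Fin q → ℝ) ⬝ᵥ x) := by
    intro i
    rw [inner_eq_dot]
    have h4 : ((B A i : Fin q → ℝ)) ⬝ᵥ ((Aᴴ * A) *ᵥ x)
        = ((Aᴴ * A) *ᵥ (B A i : Fin q → ℝ)) ⬝ᵥ (x : Fin q → ℝ) := by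
      rw [Matrix.dotProduct_mulVec]
      congr 1
      rw [Matrix.conjTranspose_eq_transpose_of_trivial]
      nth_rewrite 1 [← (Matrix.isHermitian_transpose_mul_self A).eq]
      rw [Matrix.conjTranspose_eq_transpose_of_trivial, Matrix.vecMul_transpose]
    have h4' : ((B A i : Fin q → ℝ)) ⬝ᵥ ((WithLp.equiv 2 (Fin q → ℝ)).symm ((Aᴴ * A) *ᵥ x) : Fin q → ℝ)
        = ((Aᴴ * A) *ᵥ (B A i : Fin q → ℝ)) ⬝ᵥ (x : Fin q → ℝ) := h4
    have h6 : (Aᴴ * A) *ᵥ (B A i : Fin q → ℝ) = lam A i • (B A i : Fin q → ℝ) :=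
      (Matrix.isHermitian_transpose_mul_self A).mulVec_eigenvectorBasis i
    rw [h4', h6, smul_dotProduct, smul_eq_mul]
  have h5 : ∀ i : Fin q, (inner ℝ x (B A i) : ℝ) = (B A i : Fin q → ℝ) ⬝ᵥ (x : Fin q → ℝ) := by
    intro i; rw [real_inner_comm, inner_eq_dot]
  calc (A *ᵥ x) ⬝ᵥ (A *ᵥ x)
      = (x : Fin q → ℝ) ⬝ᵥ ((Aᴴ * A) *ᵥ x) := h1
    _ = (inner ℝ x ((WithLp.equiv 2 (Fin q → ℝ)).symm ((Aᴴ * A) *ᵥ x)) : ℝ) :=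
        (inner_eq_dot x ((WithLp.equiv 2 (Fin q → ℝ)).symm ((Aᴴ * A) *ᵥ x))).symm
    _ = ∑ i, (inner ℝ x (B A i) : ℝ) * inner ℝ (B A i) ((WithLp.equiv 2 (Fin q → ℝ)).symm ((Aᴴ * A) *ᵥ x)) := h2.symm
    _ = ∑ i, lam A i * ((B A i : Fin q → ℝ) ⬝ᵥ x) ^ 2 := by
        refine Finset.sum_congr rfl fun i _ => ?_
        rw [h3 i, h5 i]; ring

lemma expand' (x : Fin q → ℝ) :
    (A *ᵥ x) ⬝ᵥ (A *ᵥ x) = ∑ i, lam A i * ((B A i : Fin q → ℝ) ⬝ᵥ x) ^ 2 :=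
  expand A ((WithLp.equiv 2 (Fin q → ℝ)).symm x)

lemma parseval' (x : Fin q → ℝ) :
    x ⬝ᵥ x = ∑ i, ((B A i : Fin q → ℝ) ⬝ᵥ x) ^ 2 :=
  parseval A ((WithLp.equiv 2 (Fin q → ℝ)).symm x)

lemma sq_le_of_sq_le {a b : ℝ} (ha : 0 ≤ a) (hb : 0 ≤ b) (h : a ^ 2 ≤ b ^ 2) : a ≤ b := by
  nlinarith

lemma nrm_mulVec_le (hq : 0 < q) (x : Fin q → ℝ) :
    nrm (A *ᵥ x) ≤ sv A 1 * nrm x := by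
  have key : (A *ᵥ x) ⬝ᵥ (A *ᵥ x) ≤ sv A 1 ^ 2 * (x ⬝ᵥ x) := by
    rw [expand' A x, parseval' A x, Finset.mul_sum]
    refine Finset.sum_le_sum fun i _ => ?_
    have h1 : lam A i ≤ sv A 1 ^ 2 := by
      rw [lam_eq_sq]
      exact pow_le_pow_left₀ (f_nonneg A i) (f_le_sv_one A hq i) 2
    exact mul_le_mul_of_nonneg_right h1 (sq_nonneg _)
  refine sq_le_of_sq_le (nrm_nonneg _) (mul_nonneg (sv_nonneg A 1) (nrm_nonneg _)) ?_
  rw [nrm_sq, mul_pow, nrm_sq]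
  exact key

lemma sv_q_nrm_le (hq : 0 < q) (x : Fin q → ℝ) :
    sv A q * nrm x ≤ nrm (A *ᵥ x) := by
  have key : sv A q ^ 2 * (x ⬝ᵥ x) ≤ (A *ᵥ x) ⬝ᵥ (A *ᵥ x) := by
    rw [expand' A x, parseval' A x, Finset.mul_sum]
    refine Finset.sum_le_sum fun i _ => ?_
    have h1 : sv A q ^ 2 ≤ lam A i := by
      rw [lam_eq_sq]
      exact pow_le_pow_left₀ (sv_nonneg A q) (sv_q_le_f A hq i) 2
    exact mul_le_mul_of_nonneg_right h1 (sq_nonneg _)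
  refine sq_le_of_sq_le (mul_nonneg (sv_nonneg A q) (nrm_nonneg _)) (nrm_nonneg _) ?_
  rw [nrm_sq, mul_pow, nrm_sq]
  exact key

end svh

namespace svh

lemma cf {p q s : ℕ} (A : Matrix (Fin p) (Fin q) ℝ) (hs1 : 1 ≤ s) (hsq : s ≤ q)
    {c : ℝ} (hc : 0 ≤ c) (w : Fin s → (Fin q → ℝ))
    (hw : ∀ i j, w i ⬝ᵥ w j = if i = j then (1 : ℝ) else 0)
    (hbound : ∀ a : Fin s → ℝ,
      c * nrm (∑ j, a j • w j) ≤ nrm (A *ᵥ (∑ j, a j • w j))) :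
    c ≤ sv A s := by
  classical
  have hq : 0 < q := lt_of_lt_of_le (lt_of_lt_of_le one_pos hs1) hsq
  set σ := Tuple.sort (f A) with hσ
  have hle : q - s + 1 ≤ q := by omega
  set ι : Fin (q - s + 1) → Fin q := fun j => σ (Fin.castLE hle j) with hι
  have hιinj : Function.Injective ι := fun a b hab => by
    have h1 := σ.injective hab
    exact Fin.castLE_injective hle h1
  set wE : Fin s → EuclideanSpace ℝ (Fin q) :=
    fun j => (WithLp.equiv 2 (Fin q → ℝ)).symm (w j) with hwE'
  have hwE : Orthonormal ℝ wE := by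
    rw [orthonormal_iff_ite]
    intro i j
    rw [inner_eq_dot]
    exact hw i j
  have hBB : Orthonormal ℝ (fun j => B A (ι j)) := (B A).orthonormal.comp ι hιinj
  set W := Submodule.span ℝ (Set.range wE) with hWdef
  set Bd := Submodule.span ℝ (Set.range fun j => B A (ι j)) with hBddef
  have hW : Module.finrank ℝ W = s := by
    rw [hWdef, finrank_span_eq_card hwE.linearIndependent]; simp
  have hBd : Module.finrank ℝ Bd = q - s + 1 := by
    rw [hBddef, finrank_span_eq_card hBB.linearIndependent]; simp
  have hsum := Submodule.finrank_sup_add_finrank_inf_eq W Bd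
  have hle2 : Module.finrank ℝ ↥(W ⊔ Bd) ≤ q := by
    refine le_trans (Submodule.finrank_le _) ?_
    simp [finrank_euclideanSpace]
  have hpos : 0 < Module.finrank ℝ ↥(W ⊓ Bd) := by omega
  have hne : W ⊓ Bd ≠ ⊥ := by
    intro h
    rw [h, finrank_bot] at hpos
    exact lt_irrefl 0 hpos
  obtain ⟨x, hxmem, hxne⟩ := Submodule.exists_mem_ne_zero_of_ne_bot hne
  obtain ⟨hxW, hxBd⟩ := Submodule.mem_inf.1 hxmem
  obtain ⟨a, ha⟩ := (Submodule.mem_span_range_iff_exists_fun ℝ).1 hxW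
  set x' : Fin q → ℝ := (WithLp.equiv 2 (Fin q → ℝ)) x with hx'def
  have hx' : x' = ∑ j, a j • w j := by
    rw [hx'def, ← ha]
    simp [hwE']
  have hb1 : c * nrm x' ≤ nrm (A *ᵥ x') := by rw [hx']; exact hbound a
  have hvan : ∀ i : Fin q, i ∉ Set.range ι → (B A i : Fin q → ℝ) ⬝ᵥ x' = 0 := by
    intro i hi
    have hker : Bd ≤ LinearMap.ker (innerSL ℝ (B A i) : EuclideanSpace ℝ (Fin q) →ₗ[ℝ] ℝ) := by
      rw [hBddef, Submodule.span_le]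
      rintro _ ⟨j, rfl⟩
      simp only [SetLike.mem_coe, LinearMap.mem_ker]
      have hne2 : i ≠ ι j := fun h => hi ⟨j, h.symm⟩
      exact (B A).orthonormal.2 hne2
    have h2 := hker hxBd
    rw [LinearMap.mem_ker] at h2
    rw [← inner_eq_dot]
    simpa using h2
  have key : (A *ᵥ x') ⬝ᵥ (A *ᵥ x') ≤ sv A s ^ 2 * (x' ⬝ᵥ x') := by
    rw [expand' A x', parseval' A x', Finset.mul_sum]
    refine Finset.sum_le_sum fun i _ => ?_
    by_cases hi : i ∈ Set.range ι
    · obtain ⟨j, rfl⟩ := hi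
      have h1 : f A (ι j) ≤ sv A s := by
        rw [sv_eq A hs1 hq]
        exact Tuple.monotone_sort (f A)
          (show Fin.castLE hle j ≤ ⟨q - s, Nat.sub_lt hq hs1⟩ by
            simp only [Fin.le_def, Fin.coe_castLE]
            omega)
      have h2 : lam A (ι j) ≤ sv A s ^ 2 := by
        rw [lam_eq_sq]
        exact pow_le_pow_left₀ (f_nonneg _ _) h1 2
      exact mul_le_mul_of_nonneg_right h2 (sq_nonneg _)
    · rw [hvan i hi]
      simp [mul_nonneg (sq_nonneg (sv A s)), sq_nonneg]
  have hx'ne : x' ≠ 0 := fun h => hxne ((WithLp.equiv 2 (Fin q → ℝ)).injective h)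
  have hxx : 0 < nrm x' := nrm_pos hx'ne
  refine sq_le_of_sq_le hc (sv_nonneg A s) ?_
  have h2 : (c * nrm x') ^ 2 ≤ (sv A s * nrm x') ^ 2 := by
    calc (c * nrm x') ^ 2 ≤ nrm (A *ᵥ x') ^ 2 :=
          pow_le_pow_left₀ (mul_nonneg hc (nrm_nonneg _)) hb1 2
      _ = (A *ᵥ x') ⬝ᵥ (A *ᵥ x') := nrm_sq _
      _ ≤ sv A s ^ 2 * (x' ⬝ᵥ x') := key
      _ = (sv A s * nrm x') ^ 2 := by rw [mul_pow, nrm_sq]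
  have hn2 : 0 < nrm x' ^ 2 := pow_pos hxx 2
  nlinarith [h2, hn2]

end svh

namespace svh

lemma nrm_eq_sqrt {q : ℕ} (x : Fin q → ℝ) : nrm x = Real.sqrt (x ⬝ᵥ x) := by
  rw [← nrm_sq, Real.sqrt_sq (nrm_nonneg x)]

lemma nrm_zero {q : ℕ} : nrm (0 : Fin q → ℝ) = 0 := by
  rw [nrm, show (WithLp.equiv 2 (Fin q → ℝ)).symm 0 = 0 from rfl, norm_zero]

noncomputable def pad {s k : ℕ} (x : Fin s → ℝ) : Fin (s + k) → ℝ := Fin.append x 0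

lemma pad_dot {s k : ℕ} (x : Fin s → ℝ) : pad (k := k) x ⬝ᵥ pad x = x ⬝ᵥ x := by
  simp [pad, dotProduct, Fin.sum_univ_add, Fin.append_left, Fin.append_right]

lemma nrm_pad {s k : ℕ} (x : Fin s → ℝ) : nrm (pad (k := k) x) = nrm x := by
  rw [nrm_eq_sqrt, nrm_eq_sqrt, pad_dot]

lemma nrm_restrict_le {s k : ℕ} (y : Fin (s + k) → ℝ) :
    nrm (fun i : Fin s => y (Fin.castAdd k i)) ≤ nrm y := by
  rw [nrm_eq_sqrt, nrm_eq_sqrt]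
  apply Real.sqrt_le_sqrt
  rw [dotProduct, dotProduct, Fin.sum_univ_add]
  have h1 : (0:ℝ) ≤ ∑ i : Fin k, y (Fin.natAdd s i) * y (Fin.natAdd s i) :=
    Finset.sum_nonneg fun i _ => mul_self_nonneg _
  linarith [h1]

lemma orth_dot {N : ℕ} (U : Matrix (Fin N) (Fin N) ℝ) (hU : Uᵀ * U = 1) (y : Fin N → ℝ) :
    (U *ᵥ y) ⬝ᵥ (U *ᵥ y) = y ⬝ᵥ y := by
  rw [Matrix.dotProduct_mulVec]
  congr 1
  rw [← Matrix.transpose_transpose U, Matrix.vecMul_transpose, Matrix.transpose_transpose,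
    Matrix.mulVec_mulVec, hU, Matrix.one_mulVec]

lemma nrm_orth {N : ℕ} (U : Matrix (Fin N) (Fin N) ℝ) (hU : Uᵀ * U = 1) (y : Fin N → ℝ) :
    nrm (U *ᵥ y) = nrm y := by
  rw [nrm_eq_sqrt, nrm_eq_sqrt, orth_dot U hU]

lemma submatrix_mulVec {s m n : ℕ} (N : Matrix (Fin (s + m)) (Fin (s + n)) ℝ) (x : Fin s → ℝ) :
    N.submatrix (Fin.castAdd m) (Fin.castAdd n) *ᵥ x
      = fun i : Fin s => (N *ᵥ pad (k := n) x) (Fin.castAdd m i) := by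
  funext i
  simp [Matrix.mulVec, dotProduct, Fin.sum_univ_add, pad, Fin.append_left, Fin.append_right]

lemma block_bound {s m n : ℕ} (N : Matrix (Fin (s + m)) (Fin (s + n)) ℝ) (hq : 0 < s + n)
    (x : Fin s → ℝ) :
    nrm (N.submatrix (Fin.castAdd m) (Fin.castAdd n) *ᵥ x) ≤ sv N 1 * nrm x := by
  rw [submatrix_mulVec]
  calc nrm (fun i : Fin s => (N *ᵥ pad (k := n) x) (Fin.castAdd m i))
      ≤ nrm (N *ᵥ pad (k := n) x) := nrm_restrict_le _
    _ ≤ sv N 1 * nrm (pad (k := n) x) := nrm_mulVec_le N hq _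
    _ = sv N 1 * nrm x := by rw [nrm_pad]

lemma diagMulVec {a b : ℕ} (g : Fin a → Fin b → ℝ)
    (hg : ∀ (i : Fin a) (j : Fin b), (i : ℕ) ≠ (j : ℕ) → g i j = 0) (z : Fin b → ℝ) (i : Fin a) :
    (Matrix.of g *ᵥ z) i = if h : (i : ℕ) < b then g i ⟨(i : ℕ), h⟩ * z ⟨(i : ℕ), h⟩ else 0 := by
  rw [Matrix.mulVec]
  show (g i) ⬝ᵥ z = _
  rw [dotProduct]
  split_ifs with h
  · exact Finset.sum_eq_single_of_mem (⟨(i : ℕ), h⟩ : Fin b) (Finset.mem_univ _)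
      (fun j _ hj => by rw [hg i j (fun hc => hj (Fin.ext (by simpa using hc.symm))), zero_mul])
  · apply Finset.sum_eq_zero
    intro j _
    rw [hg i j (by have := j.isLt; omega), zero_mul]

lemma diag_dot_le {a b : ℕ} (g : Fin a → Fin b → ℝ)
    (hg : ∀ (i : Fin a) (j : Fin b), (i : ℕ) ≠ (j : ℕ) → g i j = 0) (c : ℝ)
    (hbnd : ∀ (i : Fin a) (h : (i : ℕ) < b), g i ⟨(i : ℕ), h⟩ ^ 2 ≤ c ^ 2) (z : Fin b → ℝ) :
    (Matrix.of g *ᵥ z) ⬝ᵥ (Matrix.of g *ᵥ z) ≤ c ^ 2 * (z ⬝ᵥ z) := by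
  classical
  set zz : ℕ → ℝ := fun k => if h : k < b then z ⟨k, h⟩ else 0 with hzz
  have hz : z ⬝ᵥ z = ∑ k ∈ Finset.range b, zz k ^ 2 := by
    rw [dotProduct, ← Fin.sum_univ_eq_sum_range]
    refine Finset.sum_congr rfl fun j _ => ?_
    have hzj : zz (j : ℕ) = z j := by
      have h2 : zz (j : ℕ) = z ⟨(j : ℕ), j.isLt⟩ := dif_pos j.isLt
      simpa using h2
    rw [hzj, sq]
  have step1 : ∀ i : Fin a, (Matrix.of g *ᵥ z) i * (Matrix.of g *ᵥ z) i
      ≤ c ^ 2 * zz (i : ℕ) ^ 2 := by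
    intro i
    rw [diagMulVec g hg z i]
    split_ifs with h
    · have hzi : zz (i : ℕ) = z ⟨(i : ℕ), h⟩ := dif_pos h
      rw [hzi]
      nlinarith [hbnd i h, sq_nonneg (z ⟨(i : ℕ), h⟩), sq_nonneg (g i ⟨(i : ℕ), h⟩ * z ⟨(i : ℕ), h⟩)]
    · rw [zero_mul]
      positivity
  calc (Matrix.of g *ᵥ z) ⬝ᵥ (Matrix.of g *ᵥ z)
      = ∑ i : Fin a, (Matrix.of g *ᵥ z) i * (Matrix.of g *ᵥ z) i := rfl
    _ ≤ ∑ i : Fin a, c ^ 2 * zz (i : ℕ) ^ 2 := Finset.sum_le_sum fun i _ => step1 i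
    _ = ∑ k ∈ Finset.range a, c ^ 2 * zz k ^ 2 :=
        Fin.sum_univ_eq_sum_range (fun k => c ^ 2 * zz k ^ 2) a
    _ ≤ ∑ k ∈ Finset.range (a + b), c ^ 2 * zz k ^ 2 := by
        refine Finset.sum_le_sum_of_subset_of_nonneg
          (Finset.range_subset_range.2 (Nat.le_add_right a b)) fun k _ _ => by positivity
    _ = ∑ k ∈ Finset.range b, c ^ 2 * zz k ^ 2 := by
        refine (Finset.sum_subset (Finset.range_subset_range.2 (Nat.le_add_left b a)) ?_).symm
        intro k _ hk
        rw [Finset.mem_range, not_lt] at hk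
        rw [hzz]
        simp only [dif_neg (not_lt.2 hk)]
        ring
    _ = c ^ 2 * (z ⬝ᵥ z) := by rw [hz, Finset.mul_sum]

end svh

namespace svh

lemma nrm_neg {q : ℕ} (x : Fin q → ℝ) : nrm (-x) = nrm x := by
  rw [nrm_eq_sqrt, nrm_eq_sqrt]
  congr 1
  simp [dotProduct]

lemma nrm_sub_le {q : ℕ} (x y : Fin q → ℝ) : nrm (x - y) ≤ nrm x + nrm y := by
  have h := nrm_add_le x (-y)
  rw [nrm_neg] at h
  simpa [sub_eq_add_neg] using h

end svh

set_option maxHeartbeats 2000000 in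
/-- Lemma `a_lg_invertible`: under assumptions (1)–(4) of
Theorem `a_is_invertible` together with
`σ_{s+1}(M) < (σ_s(M) − e_s)/(β²γ) − e_s`, the top-left `s×s` block `A_lg` of
the best rank-`s` approximation `M_lg` of `M` (given by the truncated SVD of
`M = U Σ Vᵀ`) is nonsingular. -/
theorem stmt5 (m n s : ℕ) (hs : 1 ≤ s) (hm : 1 ≤ m) (hn : 1 ≤ n)
    (M : Matrix (Fin (s + m)) (Fin (s + n)) ℝ)
    (G : Matrix (Fin (s + m)) (Fin s) ℝ) (S : Matrix (Fin s) (Fin (s + n)) ℝ)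
    (es : ℝ) (hes : sv (M - G * S) 1 ≤ es)
    (GA : Matrix (Fin s) (Fin s) ℝ) (hGAdef : GA = G.submatrix (Fin.castAdd m) id)
    (SA : Matrix (Fin s) (Fin s) ℝ) (hSAdef : SA = S.submatrix id (Fin.castAdd n))
    (h1 : 0 < sv (G * S) s)
    (γ : ℝ) (hγ : 1 ≤ γ) (h2 : sv G s * sv S s = sv (G * S) s / γ)
    (β : ℝ) (hβ : 1 ≤ β) (h3G : sv G s / β ≤ sv GA s) (h3S : sv S s / β ≤ sv SA s)
    (h4 : es < (sv M s - es) / (β ^ 2 * γ))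
    -- the (full) SVD of M:
    (U : Matrix (Fin (s + m)) (Fin (s + m)) ℝ) (hU : Uᵀ * U = 1)
    (V : Matrix (Fin (s + n)) (Fin (s + n)) ℝ) (hV : Vᵀ * V = 1)
    (hSVD : M = U * (Matrix.of fun (i : Fin (s + m)) (j : Fin (s + n)) =>
      if (i : ℕ) = (j : ℕ) then sv M ((i : ℕ) + 1) else 0) * Vᵀ)
    -- the best rank-s approximation of M, by truncating its SVD:
    (Mlg : Matrix (Fin (s + m)) (Fin (s + n)) ℝ)
    (hMlg : Mlg = U * (Matrix.of fun (i : Fin (s + m)) (j : Fin (s + n)) =>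
      if (i : ℕ) = (j : ℕ) ∧ (i : ℕ) < s then sv M ((i : ℕ) + 1) else 0) * Vᵀ)
    (Alg : Matrix (Fin s) (Fin s) ℝ)
    (hAlg : Alg = Mlg.submatrix (Fin.castAdd m) (Fin.castAdd n))
    (h5 : sv M (s + 1) < (sv M s - es) / (β ^ 2 * γ) - es) :
    IsUnit Alg.det := by
  classical
  have hs0 : 0 < s := hs
  have hq1 : 0 < s + n := by omega
  have hq2 : 0 < s + m := by omega
  have hes0 : 0 ≤ es := le_trans (svh.sv_nonneg _ 1) hes
  have hβ0 : (0:ℝ) < β := lt_of_lt_of_le one_pos hβ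
  have hγ0 : (0:ℝ) < γ := lt_of_lt_of_le one_pos hγ
  have hβγ0 : (0:ℝ) < β ^ 2 * γ := by positivity
  have hP0 : 0 < (sv M s - es) / (β ^ 2 * γ) := lt_of_le_of_lt hes0 h4
  have hMs : 0 < sv M s - es := by
    rcases div_pos_iff.1 hP0 with ⟨h, _⟩ | ⟨_, h⟩
    · exact h
    · linarith
  -- the diagonal matrices
  set Dg : Fin (s + m) → Fin (s + n) → ℝ :=
    fun i j => if (i : ℕ) = (j : ℕ) then sv M ((i : ℕ) + 1) else 0 with hDgdef
  set Lg : Fin (s + m) → Fin (s + n) → ℝ :=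
    fun i j => if (i : ℕ) = (j : ℕ) ∧ (i : ℕ) < s then sv M ((i : ℕ) + 1) else 0 with hLgdef
  have hSVD' : M = U * Matrix.of Dg * Vᵀ := hSVD
  have hMlg' : Mlg = U * Matrix.of Lg * Vᵀ := hMlg
  have hDgoff : ∀ (i : Fin (s + m)) (j : Fin (s + n)), (i : ℕ) ≠ (j : ℕ) → Dg i j = 0 :=
    fun i j h => if_neg h
  -- Weyl inequality : sv M s - es ≤ sv (G*S) s
  set w : Fin s → (Fin (s + n) → ℝ) := fun j i => V i (Fin.castAdd n j) with hwdef
  have hVcol : ∀ j j' : Fin (s + n),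
      (fun i => V i j) ⬝ᵥ (fun i => V i j') = if j = j' then (1:ℝ) else 0 := by
    intro j j'
    calc (fun i => V i j) ⬝ᵥ (fun i => V i j') = (Vᵀ * V) j j' := by
          simp [Matrix.mul_apply, dotProduct, Matrix.transpose_apply]
      _ = if j = j' then 1 else 0 := by rw [hV, Matrix.one_apply]
  have hw : ∀ i j : Fin s, w i ⬝ᵥ w j = if i = j then (1:ℝ) else 0 := by
    intro i j
    have h6 := hVcol (Fin.castAdd n i) (Fin.castAdd n j)
    by_cases hij : i = j
    · subst hij; simpa using h6
    · have hne : Fin.castAdd n i ≠ Fin.castAdd n j := by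
        intro hc; exact hij (by ext; simpa using congrArg Fin.val hc)
      rw [if_neg hne] at h6
      rw [if_neg hij]
      exact h6
  have hbound : ∀ a : Fin s → ℝ,
      (sv M s - es) * nrm (∑ j, a j • w j) ≤ nrm ((G * S) *ᵥ (∑ j, a j • w j)) := by
    intro a
    set x : Fin (s + n) → ℝ := ∑ j, a j • w j with hxdef
    have hxV : x = V *ᵥ svh.pad (k := n) a := by
      funext i
      rw [hxdef]
      simp [hwdef, Finset.sum_apply, Matrix.mulVec, dotProduct, Fin.sum_univ_add, svh.pad,
        Fin.append_left, Fin.append_right, mul_comm]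
    have hMx : M *ᵥ x = U *ᵥ (Matrix.of Dg *ᵥ svh.pad (k := n) a) := by
      rw [hxV, hSVD', Matrix.mulVec_mulVec, Matrix.mul_assoc (U * Matrix.of Dg) Vᵀ V, hV,
        Matrix.mul_one, ← Matrix.mulVec_mulVec]
    have hterm : ∀ i' : Fin s,
        (Matrix.of Dg *ᵥ svh.pad (k := n) a) (Fin.castAdd m i') = sv M ((i' : ℕ) + 1) * a i' := by
      intro i'
      rw [svh.diagMulVec Dg hDgoff]
      have hlt : ((Fin.castAdd m i' : Fin (s + m)) : ℕ) < s + n := by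
        simp only [Fin.coe_castAdd]; omega
      rw [dif_pos hlt]
      have hmk : (⟨((Fin.castAdd m i' : Fin (s + m)) : ℕ), hlt⟩ : Fin (s + n))
          = Fin.castAdd n i' := by ext; simp
      rw [hmk]
      have hpadv : svh.pad (k := n) a (Fin.castAdd n i') = a i' := by
        rw [svh.pad, Fin.append_left]
      rw [hpadv, hDgdef]
      simp
    have hDlow : (sv M s) ^ 2 * (a ⬝ᵥ a)
        ≤ (Matrix.of Dg *ᵥ svh.pad (k := n) a) ⬝ᵥ (Matrix.of Dg *ᵥ svh.pad (k := n) a) := by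
      set t := Matrix.of Dg *ᵥ svh.pad (k := n) a with htdef
      have h7 : t ⬝ᵥ t = (∑ i' : Fin s, t (Fin.castAdd m i') * t (Fin.castAdd m i'))
          + ∑ i'' : Fin m, t (Fin.natAdd s i'') * t (Fin.natAdd s i'') := by
        rw [dotProduct, Fin.sum_univ_add]
      have h8 : (0:ℝ) ≤ ∑ i'' : Fin m, t (Fin.natAdd s i'') * t (Fin.natAdd s i'') :=
        Finset.sum_nonneg fun i'' _ => mul_self_nonneg _
      have h9 : (sv M s) ^ 2 * (a ⬝ᵥ a)
          ≤ ∑ i' : Fin s, t (Fin.castAdd m i') * t (Fin.castAdd m i') := by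
        rw [dotProduct, Finset.mul_sum]
        refine Finset.sum_le_sum fun i' _ => ?_
        rw [hterm i']
        have hsv1 : sv M s ≤ sv M ((i' : ℕ) + 1) :=
          svh.sv_antitone M (by omega) (by have := i'.isLt; omega) (by omega)
        have hsv0 : 0 ≤ sv M ((i' : ℕ) + 1) := svh.sv_nonneg _ _
        have hsq : sv M s ^ 2 ≤ sv M ((i' : ℕ) + 1) ^ 2 :=
          pow_le_pow_left₀ (svh.sv_nonneg M s) hsv1 2
        nlinarith [hsq, sq_nonneg (a i')]
      linarith
    have hnrm1 : sv M s * nrm a ≤ nrm (Matrix.of Dg *ᵥ svh.pad (k := n) a) := by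
      refine svh.sq_le_of_sq_le (mul_nonneg (svh.sv_nonneg M s) (nrm_nonneg a)) (nrm_nonneg _) ?_
      rw [mul_pow, nrm_sq, nrm_sq]
      exact hDlow
    have hnx : nrm x = nrm a := by
      rw [hxV, svh.nrm_orth V hV, svh.nrm_pad]
    have hnMx : sv M s * nrm a ≤ nrm (M *ᵥ x) := by
      rw [hMx, svh.nrm_orth U hU]
      exact hnrm1
    have hsubb : nrm ((M - G * S) *ᵥ x) ≤ es * nrm x :=
      le_trans (svh.nrm_mulVec_le _ hq1 x)
        (mul_le_mul_of_nonneg_right hes (nrm_nonneg x))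
    have hdecomp : (G * S) *ᵥ x = M *ᵥ x - (M - G * S) *ᵥ x := by
      rw [Matrix.sub_mulVec]; abel
    have h10 : nrm (M *ᵥ x) - nrm ((M - G * S) *ᵥ x) ≤ nrm ((G * S) *ᵥ x) := by
      rw [hdecomp]
      exact nrm_sub_ge _ _
    calc (sv M s - es) * nrm x = sv M s * nrm x - es * nrm x := by ring
      _ = sv M s * nrm a - es * nrm x := by rw [hnx]
      _ ≤ nrm (M *ᵥ x) - nrm ((M - G * S) *ᵥ x) := by linarith
      _ ≤ nrm ((G * S) *ᵥ x) := h10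
  have hWeyl : sv M s - es ≤ sv (G * S) s :=
    svh.cf (G * S) hs (by omega) (le_of_lt hMs) w hw hbound
  -- product bound
  have hGA0 : 0 ≤ sv GA s := svh.sv_nonneg _ _
  have hprod : (sv M s - es) / (β ^ 2 * γ) ≤ sv GA s * sv SA s := by
    have h6 : (sv M s - es) / (β ^ 2 * γ) ≤ sv (G * S) s / (β ^ 2 * γ) := by gcongr
    have h7 : (sv G s / β) * (sv S s / β) = sv (G * S) s / (β ^ 2 * γ) := by
      rw [div_mul_div_comm, h2, div_div]
      congr 1
      ring
    have h8 : (sv G s / β) * (sv S s / β) ≤ sv GA s * sv SA s :=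
      mul_le_mul h3G h3S (div_nonneg (svh.sv_nonneg S s) hβ0.le) hGA0
    linarith
  -- residual bound
  have hMres : M - Mlg = U * (Matrix.of Dg - Matrix.of Lg) * Vᵀ := by
    rw [hSVD', hMlg', ← Matrix.sub_mul, ← Matrix.mul_sub]
  have hRes : ∀ y : Fin (s + n) → ℝ, nrm ((M - Mlg) *ᵥ y) ≤ sv M (s + 1) * nrm y := by
    intro y
    have hVVt : (Vᵀ)ᵀ * Vᵀ = 1 := by
      rw [Matrix.transpose_transpose]
      exact mul_eq_one_comm.mp hV
    have h9 : (M - Mlg) *ᵥ y = U *ᵥ ((Matrix.of Dg - Matrix.of Lg) *ᵥ (Vᵀ *ᵥ y)) := by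
      rw [hMres, ← Matrix.mulVec_mulVec, ← Matrix.mulVec_mulVec]
    rw [h9, svh.nrm_orth U hU]
    set z := Vᵀ *ᵥ y with hzdef
    have hz : nrm z = nrm y := svh.nrm_orth Vᵀ hVVt y
    have hoff : ∀ (i : Fin (s + m)) (j : Fin (s + n)), (i : ℕ) ≠ (j : ℕ) →
        Dg i j - Lg i j = 0 := by
      intro i j h
      simp only [hDgdef, hLgdef]
      rw [if_neg h, if_neg (fun hc : (i:ℕ) = (j:ℕ) ∧ (i:ℕ) < s => h hc.1), sub_zero]
    have hbnd : ∀ (i : Fin (s + m)) (h : (i : ℕ) < s + n),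
        (Dg i ⟨(i : ℕ), h⟩ - Lg i ⟨(i : ℕ), h⟩) ^ 2 ≤ sv M (s + 1) ^ 2 := by
      intro i h
      simp only [hDgdef, hLgdef, if_true, true_and]
      split_ifs with hlt
      · simpa [sub_self] using sq_nonneg (sv M (s + 1))
      · rw [sub_zero]
        have hle : sv M ((i : ℕ) + 1) ≤ sv M (s + 1) :=
          svh.sv_antitone M (by omega) (by omega) (by omega)
        exact pow_le_pow_left₀ (svh.sv_nonneg _ _) hle 2
    have h10 : ((Matrix.of Dg - Matrix.of Lg) *ᵥ z) ⬝ᵥ ((Matrix.of Dg - Matrix.of Lg) *ᵥ z)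
        ≤ sv M (s + 1) ^ 2 * (z ⬝ᵥ z) :=
      svh.diag_dot_le (fun i j => Dg i j - Lg i j) hoff (sv M (s + 1)) hbnd z
    have h11 : nrm ((Matrix.of Dg - Matrix.of Lg) *ᵥ z) ≤ sv M (s + 1) * nrm z := by
      refine svh.sq_le_of_sq_le (nrm_nonneg _)
        (mul_nonneg (svh.sv_nonneg M (s + 1)) (nrm_nonneg z)) ?_
      rw [mul_pow, nrm_sq, nrm_sq]
      exact h10
    rw [← hz]
    exact h11
  -- lower bound for Alg
  have hGASA : GA * SA = (G * S).submatrix (Fin.castAdd m) (Fin.castAdd n) := by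
    rw [hGAdef, hSAdef]
    ext i j
    simp [Matrix.mul_apply, Matrix.submatrix_apply]
  set AM := M.submatrix (Fin.castAdd m) (Fin.castAdd n) with hAMdef
  have hlow : ∀ x : Fin s → ℝ,
      (sv GA s * sv SA s - es - sv M (s + 1)) * nrm x ≤ nrm (Alg *ᵥ x) := by
    intro x
    have h_a : sv GA s * sv SA s * nrm x ≤ nrm ((GA * SA) *ᵥ x) := by
      rw [← Matrix.mulVec_mulVec]
      calc sv GA s * sv SA s * nrm x = sv GA s * (sv SA s * nrm x) := mul_assoc _ _ _
        _ ≤ sv GA s * nrm (SA *ᵥ x) :=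
            mul_le_mul_of_nonneg_left (svh.sv_q_nrm_le SA hs0 x) hGA0
        _ ≤ nrm (GA *ᵥ (SA *ᵥ x)) := svh.sv_q_nrm_le GA hs0 _
    have hsub1 : AM - GA * SA = (M - G * S).submatrix (Fin.castAdd m) (Fin.castAdd n) := by
      rw [hGASA, hAMdef]
      ext i j
      simp [Matrix.submatrix_apply]
    have h_b : nrm ((AM - GA * SA) *ᵥ x) ≤ es * nrm x := by
      rw [hsub1]
      exact le_trans (svh.block_bound (M - G * S) hq1 x)
        (mul_le_mul_of_nonneg_right hes (nrm_nonneg x))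
    have hsub2 : AM - Alg = (M - Mlg).submatrix (Fin.castAdd m) (Fin.castAdd n) := by
      rw [hAlg, hAMdef]
      ext i j
      simp [Matrix.submatrix_apply]
    have h_c : nrm ((AM - Alg) *ᵥ x) ≤ sv M (s + 1) * nrm x := by
      rw [hsub2, svh.submatrix_mulVec]
      calc nrm (fun i : Fin s => ((M - Mlg) *ᵥ svh.pad (k := n) x) (Fin.castAdd m i))
          ≤ nrm ((M - Mlg) *ᵥ svh.pad (k := n) x) := svh.nrm_restrict_le _
        _ ≤ sv M (s + 1) * nrm (svh.pad (k := n) x) := hRes _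
        _ = sv M (s + 1) * nrm x := by rw [svh.nrm_pad]
    have t1 : nrm ((GA * SA) *ᵥ x) ≤ nrm (AM *ᵥ x) + nrm ((AM - GA * SA) *ᵥ x) := by
      have hd : (GA * SA) *ᵥ x = AM *ᵥ x - (AM - GA * SA) *ᵥ x := by
        rw [Matrix.sub_mulVec]; abel
      rw [hd]
      exact svh.nrm_sub_le _ _
    have t2 : nrm (AM *ᵥ x) ≤ nrm (Alg *ᵥ x) + nrm ((AM - Alg) *ᵥ x) := by
      have hd : AM *ᵥ x = Alg *ᵥ x - ((Alg - AM) *ᵥ x) := by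
        rw [Matrix.sub_mulVec]; abel
      have hd2 : (Alg - AM) *ᵥ x = -((AM - Alg) *ᵥ x) := by
        rw [Matrix.sub_mulVec, Matrix.sub_mulVec]; abel
      rw [hd, hd2, sub_neg_eq_add]
      exact nrm_add_le _ _
    linarith
  -- conclusion
  rw [isUnit_iff_ne_zero]
  intro hdet
  obtain ⟨v, hvne, hv0⟩ := Matrix.exists_mulVec_eq_zero_iff.mpr hdet
  have hb := hlow v
  rw [hv0, svh.nrm_zero] at hb
  have hnv : 0 < nrm v := nrm_pos hvne
  have hcoef : 0 < sv GA s * sv SA s - es - sv M (s + 1) := by linarith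
  nlinarith [mul_pos hcoef hnv]
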